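/- If the Max criterion holds at step k, i.e., α · ‖(A_kk^(k))⁻¹‖₁⁻¹ ≥ max_{i>k} ‖A_{i,k}^(k)‖₁, then for all i,j > k the updated tile A_{i,j}^(k+1) = A_{i,j}^(k) − A_{i,k}^(k) (A_{k,k}^(k))⁻¹ A_{k,j}^(k) satisfies ‖A_{i,j}^(k+1)‖₁ ≤ (1+α) · max_{i'≥k} ‖A_{i',j}^(k)‖₁. -/

import Mathlib

/-- The induced matrix 1-norm (maximum absolute column sum). -/
noncomputable def norm1 {ι κ : Type*} [Fintype ι] [Fintype κ] (M : Matrix ι κ ℝ) : ℝ :=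
  ⨆ j, ∑ i, |M i j|

lemma norm1_nonneg {ι κ : Type*} [Fintype ι] [Fintype κ] (M : Matrix ι κ ℝ) :
    0 ≤ norm1 M :=
  Real.iSup_nonneg fun _ => Finset.sum_nonneg fun _ _ => abs_nonneg _

lemma colsum_le_norm1 {ι κ : Type*} [Fintype ι] [Fintype κ] (M : Matrix ι κ ℝ) (j : κ) :
    ∑ i, |M i j| ≤ norm1 M := by
  show _ ≤ ⨆ j, ∑ i, |M i j|
  exact le_ciSup (Set.Finite.bddAbove (Set.finite_range fun j => ∑ i, |M i j|)) j

lemma norm1_sub_le {ι κ : Type*} [Fintype ι] [Fintype κ] (M N : Matrix ι κ ℝ) :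
    norm1 (M - N) ≤ norm1 M + norm1 N := by
  apply Real.iSup_le _ (add_nonneg (norm1_nonneg M) (norm1_nonneg N))
  intro j
  calc ∑ i, |(M - N) i j| ≤ ∑ i, (|M i j| + |N i j|) := by
        refine Finset.sum_le_sum fun i _ => ?_
        simp only [Matrix.sub_apply]
        exact abs_sub _ _
    _ = (∑ i, |M i j|) + ∑ i, |N i j| := Finset.sum_add_distrib
    _ ≤ norm1 M + norm1 N := add_le_add (colsum_le_norm1 M j) (colsum_le_norm1 N j)

lemma norm1_mul_le {ι κ μ : Type*} [Fintype ι] [Fintype κ] [Fintype μ]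
    (M : Matrix ι κ ℝ) (N : Matrix κ μ ℝ) :
    norm1 (M * N) ≤ norm1 M * norm1 N := by
  apply Real.iSup_le _ (mul_nonneg (norm1_nonneg M) (norm1_nonneg N))
  intro j
  calc ∑ i, |(M * N) i j| ≤ ∑ i, ∑ l, |M i l * N l j| := by
        refine Finset.sum_le_sum fun i _ => ?_
        rw [Matrix.mul_apply]
        exact Finset.abs_sum_le_sum_abs _ _
    _ = ∑ l, (∑ i, |M i l|) * |N l j| := by
        rw [Finset.sum_comm]
        simp [abs_mul, Finset.sum_mul]
    _ ≤ ∑ l, norm1 M * |N l j| :=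
        Finset.sum_le_sum fun l _ =>
          mul_le_mul_of_nonneg_right (colsum_le_norm1 M l) (abs_nonneg _)
    _ = norm1 M * ∑ l, |N l j| := by rw [Finset.mul_sum]
    _ ≤ norm1 M * norm1 N :=
        mul_le_mul_of_nonneg_left (colsum_le_norm1 N j) (norm1_nonneg M)

/-- If the Max criterion holds at step `k`, then every Schur-updated tile's 1-norm is
bounded by `(1+α)` times the largest tile norm in the same column among rows `≥ k`. -/
theorem max_criterion_one_step
    {n nb : ℕ} (A : Fin n → Fin n → Matrix (Fin nb) (Fin nb) ℝ)
    (k : Fin n) (α : ℝ) (hα : 0 < α)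
    (hinv : IsUnit (A k k))
    (hcrit : ∀ i, k < i → norm1 (A i k) ≤ α * (norm1 ((A k k)⁻¹))⁻¹) :
    ∀ i j, k < i → k < j →
      norm1 (A i j - A i k * (A k k)⁻¹ * A k j)
        ≤ (1 + α) * ⨆ i' : {i' : Fin n // k ≤ i'}, norm1 (A i'.val j) := by
  intro i j hi hj
  set M : ℝ := ⨆ i' : {i' : Fin n // k ≤ i'}, norm1 (A i'.val j) with hM
  have hle : ∀ i' : Fin n, k ≤ i' → norm1 (A i' j) ≤ M := by
    intro i' h
    exact le_ciSup (Set.Finite.bddAbove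
      (Set.finite_range fun i'' : {i'' : Fin n // k ≤ i''} => norm1 (A i''.val j)))
      (⟨i', h⟩ : {i' : Fin n // k ≤ i'})
  have hMnn : 0 ≤ M := le_trans (norm1_nonneg (A k j)) (hle k le_rfl)
  set β : ℝ := norm1 ((A k k)⁻¹) with hβ
  have hβnn : 0 ≤ β := norm1_nonneg _
  have hAik : norm1 (A i k) * β ≤ α := by
    rcases eq_or_lt_of_le hβnn with h0 | h0
    · rw [← h0, mul_zero]; exact le_of_lt hα
    · calc norm1 (A i k) * β ≤ α * β⁻¹ * β :=
            mul_le_mul_of_nonneg_right (hcrit i hi) (le_of_lt h0)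
        _ = α := by field_simp
  calc norm1 (A i j - A i k * (A k k)⁻¹ * A k j)
      ≤ norm1 (A i j) + norm1 (A i k * (A k k)⁻¹ * A k j) := norm1_sub_le _ _
    _ ≤ norm1 (A i j) + norm1 (A i k * (A k k)⁻¹) * norm1 (A k j) :=
        add_le_add le_rfl (norm1_mul_le _ _)
    _ ≤ norm1 (A i j) + norm1 (A i k) * β * norm1 (A k j) := by
        refine add_le_add le_rfl (mul_le_mul_of_nonneg_right (norm1_mul_le _ _) ?_)
        exact norm1_nonneg _
    _ ≤ M + α * M := by
        refine add_le_add (hle i (le_of_lt hi)) ?_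
        calc norm1 (A i k) * β * norm1 (A k j) ≤ α * norm1 (A k j) :=
              mul_le_mul_of_nonneg_right hAik (norm1_nonneg _)
          _ ≤ α * M := mul_le_mul_of_nonneg_left (hle k le_rfl) (le_of_lt hα)
    _ = (1 + α) * M := by ring
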